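/- Let 𝒞 be a Fraïssé class with Fraïssé limit U and let V, W ∈ 𝒞̄. If r : U ↠ V is a universal homogeneous retraction and s : V ↠ W is any retraction, then there exists a universal homogeneous retraction ŝ : U ↠ W. -/

import Mathlib

set_option linter.unusedSectionVars false
set_option maxHeartbeats 1000000


universe u v w

open FirstOrder FirstOrder.Language CategoryTheory

namespace UHomog

variable (L : FirstOrder.Language.{u, v})

/-- The class `𝒞̄` of countable structures whose age is contained in `K`. -/
def InBar (K : Set (Bundled.{w} L.Structure)) (A : Type w) [L.Structure A] : Prop :=
  Countable A ∧ L.age A ⊆ K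

/-- A homomorphism `u : U → T` is universal within `𝒞̄ = K̄` if every homomorphism from a member
of `K̄` to `T` factors through an embedding into `U`. -/
def IsUniversalHom (K : Set (Bundled.{w} L.Structure)) {U T : Type w}
    [L.Structure U] [L.Structure T] (u : U →[L] T) : Prop :=
  ∀ A : Bundled.{w} L.Structure, InBar L K A → ∀ h : A →[L] T,
    ∃ ι : A ↪[L] U, ∀ a : A, u (ι a) = h a

/-- A homomorphism `u : U → T` is homogeneous if every embedding of a finitely generated
substructure of `U` into `U` compatible with `u` extends to an automorphism of `U` compatible
with `u`. -/
def IsHomogeneousHom {U T : Type w} [L.Structure U] [L.Structure T] (u : U →[L] T) : Prop :=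
  ∀ S : L.Substructure U, S.FG → ∀ ι : S ↪[L] U,
    (∀ s : S, u (ι s) = u s) →
    ∃ α : U ≃[L] U, (∀ x : U, u (α x) = u x) ∧ ∀ s : S, α s = ι s

/-- An age: a class of finitely generated structures with countably many isomorphism types,
closed under isomorphism, with the hereditary property and the joint embedding property. -/
def IsAge (K : Set (Bundled.{w} L.Structure)) : Prop :=
  K.Nonempty ∧
  (∀ M : Bundled.{w} L.Structure, M ∈ K → Structure.FG L M) ∧
  (∀ M N : Bundled.{w} L.Structure, Nonempty (M ≃[L] N) → (M ∈ K ↔ N ∈ K)) ∧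
  (∃ S : Set (Bundled.{w} L.Structure), S.Countable ∧
    ∀ M ∈ K, ∃ N ∈ S, Nonempty (M ≃[L] N)) ∧
  Hereditary K ∧ JointEmbedding K

/-- The square `g₁ ∘ f₁ = g₂ ∘ f₂` is a pushout square in the category of countable structures
with age contained in `K`, with homomorphisms as morphisms. -/
def IsPushoutSquare (K : Set (Bundled.{w} L.Structure)) {A B₁ B₂ C : Type w}
    [L.Structure A] [L.Structure B₁] [L.Structure B₂] [L.Structure C]
    (f₁ : A ↪[L] B₁) (f₂ : A ↪[L] B₂) (g₁ : B₁ →[L] C) (g₂ : B₂ →[L] C) : Prop :=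
  g₁.comp f₁.toHom = g₂.comp f₂.toHom ∧
  ∀ D : Bundled.{w} L.Structure, InBar L K D → ∀ (k₁ : B₁ →[L] D) (k₂ : B₂ →[L] D),
    k₁.comp f₁.toHom = k₂.comp f₂.toHom →
    ∃! m : C →[L] D, m.comp g₁ = k₁ ∧ m.comp g₂ = k₂

/-- A strict Fraïssé class: a Fraïssé class in which every span of embeddings can be completed to
a canonical (pushout) amalgam. -/
def IsStrictFraisse (K : Set (Bundled.{w} L.Structure)) : Prop :=
  IsFraisse K ∧
  ∀ A B₁ B₂ : Bundled.{w} L.Structure, A ∈ K → B₁ ∈ K → B₂ ∈ K →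
    ∀ (f₁ : A ↪[L] B₁) (f₂ : A ↪[L] B₂),
      ∃ (C : Bundled.{w} L.Structure) (g₁ : B₁ →[L] C) (g₂ : B₂ →[L] C),
        C ∈ K ∧ IsPushoutSquare L K f₁ f₂ g₁ g₂

/-- A Fraïssé class `K₀` is free in the strict Fraïssé class `K` if it is closed with respect to
canonical (pushout) amalgams in `K`. -/
def IsFreeIn (K₀ K : Set (Bundled.{w} L.Structure)) : Prop :=
  K₀ ⊆ K ∧
  ∀ A B₁ B₂ : Bundled.{w} L.Structure, A ∈ K₀ → B₁ ∈ K₀ → B₂ ∈ K₀ →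
    ∀ (f₁ : A ↪[L] B₁) (f₂ : A ↪[L] B₂),
      ∃ (C : Bundled.{w} L.Structure) (g₁ : B₁ →[L] C) (g₂ : B₂ →[L] C),
        C ∈ K₀ ∧ IsPushoutSquare L K f₁ f₂ g₁ g₂

/-- The amalgamated extension property. -/
def AmalgamatedExtension (K : Set (Bundled.{w} L.Structure)) : Prop :=
  ∀ A B₁ B₂ T : Bundled.{w} L.Structure, A ∈ K → B₁ ∈ K → B₂ ∈ K → T ∈ K →
    ∀ (f₁ : A ↪[L] B₁) (f₂ : A ↪[L] B₂) (h₁ : B₁ →[L] T) (h₂ : B₂ →[L] T),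
      h₁.comp f₁.toHom = h₂.comp f₂.toHom →
      ∃ (C T' : Bundled.{w} L.Structure) (g₁ : B₁ ↪[L] C) (g₂ : B₂ ↪[L] C)
        (k : T ↪[L] T') (h : C →[L] T'),
        C ∈ K ∧ T' ∈ K ∧ g₁.comp f₁ = g₂.comp f₂ ∧
        h.comp g₁.toHom = k.toHom.comp h₁ ∧ h.comp g₂.toHom = k.toHom.comp h₂

/-- The homo amalgamation property (HAP). -/
def HAP (K : Set (Bundled.{w} L.Structure)) : Prop :=
  ∀ A B₁ B₂ : Bundled.{w} L.Structure, A ∈ K → B₁ ∈ K → B₂ ∈ K →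
    ∀ (f₁ : A ↪[L] B₁) (f₂ : A →[L] B₂),
      ∃ (C : Bundled.{w} L.Structure) (g₁ : B₁ →[L] C) (g₂ : B₂ ↪[L] C),
        C ∈ K ∧ g₁.comp f₁.toHom = g₂.toHom.comp f₂

/-- A homomorphism `r : A → B` is a retraction if it has a section. -/
def IsRetraction {A B : Type w} [L.Structure A] [L.Structure B] (r : A →[L] B) : Prop :=
  ∃ ι : B →[L] A, ∀ b : B, r (ι b) = b

end UHomog

namespace S8

variable {L : FirstOrder.Language.{u, v}}
variable {U V W : Type w} [L.Structure U] [L.Structure V] [L.Structure W]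

/-- Partial decorations of `U` by homomorphisms to `W`. -/
structure PartW (L : FirstOrder.Language.{u, v}) (U W : Type w) [L.Structure U]
    [L.Structure W] where
  dom : L.Substructure U
  fg : dom.FG
  w : dom →[L] W

instance : Preorder (PartW L U W) where
  le p q := ∃ h : p.dom ≤ q.dom, ∀ (x : U) (hx : x ∈ p.dom), q.w ⟨x, h hx⟩ = p.w ⟨x, hx⟩
  le_refl p := ⟨le_rfl, fun _ _ => rfl⟩
  le_trans p q t := by
    rintro ⟨h1, e1⟩ ⟨h2, e2⟩
    exact ⟨h1.trans h2, fun x hx => (e2 x (h1 hx)).trans (e1 x hx)⟩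

lemma PartW.dom_le {p q : PartW L U W} (h : p ≤ q) : p.dom ≤ q.dom := h.1

lemma PartW.w_eq {p q : PartW L U W} (h : p ≤ q) (x : U) (hx : x ∈ p.dom) :
    q.w ⟨x, h.1 hx⟩ = p.w ⟨x, hx⟩ := h.2 x hx

section Lemmas

variable [Countable (Σ l, L.Functions l)] [Countable U]
variable {K : Set (Bundled.{w} L.Structure)}
variable (r : U →[L] V) (s : V →[L] W) (ιs : W →[L] V)

lemma lift_hom (hage : L.age U = K)
    (hruniv : ∀ A : Bundled.{w} L.Structure, (Countable A ∧ L.age A ⊆ K) → ∀ h : A →[L] V,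
      ∃ ι : A ↪[L] U, ∀ a : A, r (ι a) = h a)
    (S : L.Substructure U) (ψ : S →[L] V) :
    ∃ m : S ↪[L] U, ∀ x : S, r (m x) = ψ x := by
  have hcount : Countable S := inferInstance
  have hsub : L.age S ⊆ K := hage ▸ S.subtype.age_subset_age
  exact hruniv (Bundled.of S) ⟨hcount, hsub⟩ ψ

lemma match_emb
    (hrhom : ∀ S : L.Substructure U, S.FG → ∀ ι : S ↪[L] U,
      (∀ x : S, r (ι x) = r x) → ∃ α : U ≃[L] U, (∀ x : U, r (α x) = r x) ∧ ∀ x : S, α x = ι x)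
    {X : Type w} [L.Structure X] (hX : Structure.FG L X)
    (m₁ m₂ : X ↪[L] U) (hm : ∀ x, r (m₁ x) = r (m₂ x)) :
    ∃ δ : U ≃[L] U, (∀ u, r (δ u) = r u) ∧ ∀ x, δ (m₁ x) = m₂ x := by
  have hS : m₁.toHom.range.FG := hX.range m₁.toHom
  set S := m₁.toHom.range with hSdef
  let ι' : S ↪[L] U := m₂.comp m₁.equivRange.symm.toEmbedding
  have key : ∀ y : S, m₁ (m₁.equivRange.symm y) = (y : U) := by
    intro y
    have h2 := m₁.equivRange.apply_symm_apply y
    calc m₁ (m₁.equivRange.symm y) = ((m₁.equivRange (m₁.equivRange.symm y) : S) : U) := by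
          rw [Embedding.equivRange_apply]
      _ = (y : U) := by rw [h2]
  have hι' : ∀ y : S, r (ι' y) = r y := by
    intro y
    show r (m₂ (m₁.equivRange.symm y)) = r y
    rw [← hm, key]
  obtain ⟨α, hα1, hα2⟩ := hrhom S hS ι' hι'
  refine ⟨α, hα1, fun x => ?_⟩
  have hx : m₁ x ∈ S := m₁.toHom.mem_range_self x
  have h3 := hα2 ⟨m₁ x, hx⟩
  simp only at h3
  rw [h3]
  show m₂ (m₁.equivRange.symm ⟨m₁ x, hx⟩) = m₂ x
  congr 1
  have h4 : m₁.equivRange x = ⟨m₁ x, hx⟩ := by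
    ext; rw [Embedding.equivRange_apply]
  rw [← h4, m₁.equivRange.symm_apply_apply]

lemma extend_emb (hhomog : L.IsUltrahomogeneous U)
    {X Y : Type w} [L.Structure X] [L.Structure Y] (hX : Structure.FG L X)
    (hY : Nonempty (Y ↪[L] U)) (f : X ↪[L] U) (g : X ↪[L] Y) :
    ∃ f' : Y ↪[L] U, ∀ x, f' (g x) = f x := by
  obtain ⟨f', hf'⟩ := hhomog.extend_embedding hX f g (h := hY)
  exact ⟨f', fun x => by rw [hf']; rfl⟩

variable (hage : L.age U = K) (hhomog : L.IsUltrahomogeneous U)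
  (hruniv : ∀ A : Bundled.{w} L.Structure, (Countable A ∧ L.age A ⊆ K) → ∀ h : A →[L] V,
      ∃ ι : A ↪[L] U, ∀ a : A, r (ι a) = h a)
  (hrhom : ∀ S : L.Substructure U, S.FG → ∀ ι : S ↪[L] U,
      (∀ x : S, r (ι x) = r x) → ∃ α : U ≃[L] U, (∀ x : U, r (α x) = r x) ∧ ∀ x : S, α x = ι x)
  (hιs : ∀ x, s (ιs x) = x)

include hage hhomog hruniv hιs in
lemma extend_w (p : PartW L U W) (S' : L.Substructure U) (hS' : S'.FG) (hle : p.dom ≤ S') :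
    ∃ w' : S' →[L] W, ∀ (x : U) (hx : x ∈ p.dom), w' ⟨x, hle hx⟩ = p.w ⟨x, hx⟩ := by
  obtain ⟨m, hm⟩ := lift_hom r hage hruniv p.dom (ιs.comp p.w)
  have hfg : Structure.FG L p.dom := (Substructure.fg_iff_structure_fg _).1 p.fg
  obtain ⟨m', hm'⟩ := extend_emb hhomog hfg ⟨S'.subtype⟩ m (Substructure.inclusion hle)
  refine ⟨(s.comp r).comp m'.toHom, fun x hx => ?_⟩
  have h1 : m' (Substructure.inclusion hle ⟨x, hx⟩) = m ⟨x, hx⟩ := hm' _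
  have h2 : (Substructure.inclusion hle ⟨x, hx⟩ : S') = ⟨x, hle hx⟩ := rfl
  show s (r (m' ⟨x, hle hx⟩)) = p.w ⟨x, hx⟩
  rw [← h2, h1, hm]
  show s (ιs (p.w ⟨x, hx⟩)) = p.w ⟨x, hx⟩
  exact hιs _

include hage hhomog hruniv hrhom hιs in
lemma realize (p : PartW L U W) (A B : L.Substructure U) (hA : A.FG) (hB : B.FG)
    (e₀ : A ↪[L] U) (i : A ↪[L] B) (b : B →[L] W)
    (hrange : ∀ a : A, e₀ a ∈ p.dom) (hcomp : ∀ a : A, p.w ⟨e₀ a, hrange a⟩ = b (i a)) :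
    ∃ q : PartW L U W, p ≤ q ∧ ∃ e₁ : B ↪[L] U, (∀ a : A, e₁ (i a) = (e₀ a : U)) ∧
      ∃ hr : ∀ x : B, e₁ x ∈ q.dom, ∀ x : B, q.w ⟨e₁ x, hr x⟩ = b x := by
  classical
  obtain ⟨m₁, hm₁⟩ := lift_hom r hage hruniv p.dom (ιs.comp p.w)
  obtain ⟨m₂, hm₂⟩ := lift_hom r hage hruniv B (ιs.comp b)
  have hAfg : Structure.FG L A := (Substructure.fg_iff_structure_fg _).1 hA
  have hBfg : Structure.FG L B := (Substructure.fg_iff_structure_fg _).1 hB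
  have hpfg : Structure.FG L p.dom := (Substructure.fg_iff_structure_fg _).1 p.fg
  let eh : A ↪[L] p.dom := e₀.codRestrict p.dom hrange
  have hmatch : ∀ a : A, r ((m₁.comp eh) a) = r ((m₂.comp i) a) := by
    intro a
    show r (m₁ (eh a)) = r (m₂ (i a))
    rw [hm₁, hm₂]
    show ιs (p.w (eh a)) = ιs (b (i a))
    congr 1
    have : eh a = ⟨e₀ a, hrange a⟩ := Embedding.codRestrict_apply' _ _ _
    rw [this, hcomp]
  obtain ⟨δ, hδ1, hδ2⟩ := match_emb r hrhom hAfg (m₁.comp eh) (m₂.comp i) hmatch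
  let φ : p.dom ↪[L] U := δ.toEmbedding.comp m₁
  have hφw : ∀ x : p.dom, s (r (φ x)) = p.w x := by
    intro x
    show s (r (δ (m₁ x))) = _
    rw [hδ1, hm₁]
    exact hιs _
  let C : L.Substructure U := φ.toHom.range ⊔ m₂.toHom.range
  have hCfg : C.FG := (hpfg.range φ.toHom).sup (hBfg.range m₂.toHom)
  have hCfg' : Structure.FG L C := (Substructure.fg_iff_structure_fg _).1 hCfg
  let φ' : p.dom ↪[L] C :=
    φ.codRestrict C (fun x => (le_sup_left : φ.toHom.range ≤ C) (φ.toHom.mem_range_self x))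
  let m₂' : B ↪[L] C :=
    m₂.codRestrict C (fun x => (le_sup_right : m₂.toHom.range ≤ C) (m₂.toHom.mem_range_self x))
  obtain ⟨ψ, hψ⟩ := extend_emb hhomog hpfg ⟨C.subtype⟩ p.dom.subtype φ'
  have hsymm : ∀ (c : C) (hc : ψ c ∈ ψ.toHom.range), ψ.equivRange.symm ⟨ψ c, hc⟩ = c := by
    intro c hc
    have h5 : ψ.equivRange c = ⟨ψ c, hc⟩ := by ext; rw [Embedding.equivRange_apply]
    rw [← h5, ψ.equivRange.symm_apply_apply]
  let q : PartW L U W :=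
    ⟨ψ.toHom.range, hCfg'.range ψ.toHom,
      ((s.comp r).comp C.subtype.toHom).comp ψ.equivRange.symm.toHom⟩
  have hqw : ∀ (c : C) (hc : ψ c ∈ ψ.toHom.range), q.w ⟨ψ c, hc⟩ = s (r (c : U)) := by
    intro c hc
    show s (r ((ψ.equivRange.symm ⟨ψ c, hc⟩ : C) : U)) = _
    rw [hsymm c hc]
  have hmemψ : ∀ c : C, ψ c ∈ ψ.toHom.range := fun c => ψ.toHom.mem_range_self c
  have hdomle : p.dom ≤ ψ.toHom.range := by
    intro x hx
    have := hψ ⟨x, hx⟩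
    exact Hom.mem_range.2 ⟨φ' ⟨x, hx⟩, this⟩
  have hpq : p ≤ q := by
    refine ⟨hdomle, fun x hx => ?_⟩
    have h7 : (⟨x, hdomle hx⟩ : ψ.toHom.range) = ⟨ψ (φ' ⟨x, hx⟩), hmemψ _⟩ := by
      ext; exact (hψ ⟨x, hx⟩).symm
    rw [h7, hqw]
    have h8 : ((φ' ⟨x, hx⟩ : C) : U) = φ ⟨x, hx⟩ := Embedding.codRestrict_apply _ _ _
    rw [h8]
    exact hφw ⟨x, hx⟩
  refine ⟨q, hpq, ψ.comp m₂', fun a => ?_, fun x => hmemψ (m₂' x), fun x => ?_⟩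
  · show ψ (m₂' (i a)) = (e₀ a : U)
    have h9 : m₂' (i a) = φ' (eh a) := by
      apply Subtype.ext
      show m₂ (i a) = ((φ' (eh a) : C) : U)
      have h10 : ((φ' (eh a) : C) : U) = φ (eh a) := Embedding.codRestrict_apply _ _ _
      rw [h10]
      exact (hδ2 a).symm
    rw [h9, hψ (eh a)]
    rfl
  · show q.w ⟨ψ (m₂' x), _⟩ = b x
    rw [hqw]
    have h11 : ((m₂' x : C) : U) = m₂ x := Embedding.codRestrict_apply _ _ _
    rw [h11, hm₂]
    exact hιs _



end Lemmas

/-- A task for the cofinal bookkeeping. -/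
structure Task (L : FirstOrder.Language.{u, v}) (U W : Type w) [L.Structure U]
    [L.Structure W] where
  A : L.Substructure U
  hA : A.FG
  B : L.Substructure U
  hB : B.FG
  e₀ : A ↪[L] U
  i : A ↪[L] B
  b : B →[L] W

lemma task_countable [Countable U] (hW : Countable W) : Countable (Task L U W) := by
  haveI := hW
  haveI : ∀ AB : {S : L.Substructure U // S.FG} × {S : L.Substructure U // S.FG},
      Countable ((AB.1.1 ↪[L] U) × (AB.1.1 ↪[L] AB.2.1) × (AB.2.1 →[L] W)) := by
    intro AB
    haveI h1 : Structure.FG L AB.1.1 := (Substructure.fg_iff_structure_fg _).1 AB.1.2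
    haveI h2 : Countable AB.2.1 := inferInstance
    haveI := Structure.FG.countable_embedding U h1
    haveI := Structure.FG.countable_embedding (AB.2.1 : Type w) h1
    haveI := Structure.FG.countable_hom (L := L) (M := AB.2.1) W
      ((Substructure.fg_iff_structure_fg _).1 AB.2.2)
    infer_instance
  haveI : Countable (Σ AB : {S : L.Substructure U // S.FG} × {S : L.Substructure U // S.FG},
      (AB.1.1 ↪[L] U) × (AB.1.1 ↪[L] AB.2.1) × (AB.2.1 →[L] W)) := inferInstance
  let F : Task L U W → (Σ AB : {S : L.Substructure U // S.FG} × {S : L.Substructure U // S.FG},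
      (AB.1.1 ↪[L] U) × (AB.1.1 ↪[L] AB.2.1) × (AB.2.1 →[L] W)) :=
    fun τ => ⟨(⟨τ.A, τ.hA⟩, ⟨τ.B, τ.hB⟩), τ.e₀, τ.i, τ.b⟩
  have Finj : Function.Injective F := by
    rintro ⟨A, hA, B, hB, e₀, i, b⟩ ⟨A', hA', B', hB', e₀', i', b'⟩ h
    have hAA : A = A' := congrArg (fun z => z.1.1.1) h
    have hBB : B = B' := congrArg (fun z => z.1.2.1) h
    subst hAA; subst hBB
    obtain ⟨-, h2⟩ := Sigma.mk.inj_iff.1 h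
    have h3 := eq_of_heq h2
    obtain ⟨he, h4⟩ := Prod.ext_iff.1 h3
    obtain ⟨hi, hb⟩ := Prod.ext_iff.1 h4
    dsimp at he hi hb
    subst he; subst hi; subst hb
    rfl
  exact Function.Embedding.countable ⟨F, Finj⟩


/-- Whether a task is fulfilled at a stage. -/
def TaskOK (τ : Task L U W) (p : PartW L U W) : Prop :=
  ∃ h0 : ∀ a : τ.A, τ.e₀ a ∈ p.dom,
    (∀ a : τ.A, p.w ⟨τ.e₀ a, h0 a⟩ = τ.b (τ.i a)) →
      ∃ e₁ : τ.B ↪[L] U, (∀ a : τ.A, e₁ (τ.i a) = (τ.e₀ a : U)) ∧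
        ∃ hr : ∀ x : τ.B, e₁ x ∈ p.dom, ∀ x : τ.B, p.w ⟨e₁ x, hr x⟩ = τ.b x

section Chain

variable [Countable (Σ l, L.Functions l)] [Countable U]
variable {K : Set (Bundled.{w} L.Structure)}
variable (r : U →[L] V) (s : V →[L] W) (ιs : W →[L] V)

variable (hage : L.age U = K) (hhomog : L.IsUltrahomogeneous U)
  (hruniv : ∀ A : Bundled.{w} L.Structure, (Countable A ∧ L.age A ⊆ K) → ∀ h : A →[L] V,
      ∃ ι : A ↪[L] U, ∀ a : A, r (ι a) = h a)
  (hrhom : ∀ S : L.Substructure U, S.FG → ∀ ι : S ↪[L] U,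
      (∀ x : S, r (ι x) = r x) → ∃ α : U ≃[L] U, (∀ x : U, r (α x) = r x) ∧ ∀ x : S, α x = ι x)
  (hιs : ∀ x, s (ιs x) = x)

include hage hhomog hruniv hιs in
lemma cof_pt (x : U) (p : PartW L U W) : ∃ q : PartW L U W, p ≤ q ∧ x ∈ q.dom := by
  have hS' : (p.dom ⊔ Substructure.closure L {x}).FG :=
    p.fg.sup (Substructure.fg_closure_singleton x)
  obtain ⟨w', hw'⟩ := extend_w r s ιs hage hhomog hruniv hιs p _ hS' le_sup_left
  exact ⟨⟨_, hS', w'⟩, ⟨le_sup_left, hw'⟩,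
    (le_sup_right : Substructure.closure L {x} ≤ _)
      (Substructure.subset_closure (Set.mem_singleton x))⟩

include hage hhomog hruniv hrhom hιs in
lemma cof_task (τ : Task L U W) (p : PartW L U W) :
    ∃ q : PartW L U W, p ≤ q ∧ TaskOK τ q := by
  classical
  have hS' : (p.dom ⊔ τ.e₀.toHom.range).FG :=
    p.fg.sup (((Substructure.fg_iff_structure_fg _).1 τ.hA).range τ.e₀.toHom)
  obtain ⟨w', hw'⟩ := extend_w r s ιs hage hhomog hruniv hιs p _ hS' le_sup_left
  set p₁ : PartW L U W := ⟨_, hS', w'⟩ with hp₁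
  have hpp₁ : p ≤ p₁ := ⟨le_sup_left, hw'⟩
  have h0 : ∀ a : τ.A, τ.e₀ a ∈ p₁.dom :=
    fun a => (le_sup_right : τ.e₀.toHom.range ≤ _) (τ.e₀.toHom.mem_range_self a)
  by_cases H : ∀ a : τ.A, p₁.w ⟨τ.e₀ a, h0 a⟩ = τ.b (τ.i a)
  · obtain ⟨q, hq1, e₁, he₁, hr, hq2⟩ := realize r s ιs hage hhomog hruniv hrhom hιs
      p₁ τ.A τ.B τ.hA τ.hB τ.e₀ τ.i τ.b h0 H
    exact ⟨q, hpp₁.trans hq1, fun a => hq1.1 (h0 a), fun _ => ⟨e₁, he₁, hr, hq2⟩⟩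
  · exact ⟨p₁, hpp₁, h0, fun hyp => absurd hyp H⟩

include hage hhomog hruniv hrhom hιs in
lemma exists_EP (hWc : Countable W) :
    ∃ t : U →[L] W,
      ∀ (A B : L.Substructure U), A.FG → B.FG →
        ∀ (e₀ : A ↪[L] U) (i : A ↪[L] B) (b : B →[L] W),
        (∀ a : A, t (e₀ a) = b (i a)) →
        ∃ e₁ : B ↪[L] U, (∀ a : A, e₁ (i a) = (e₀ a : U)) ∧ ∀ x : B, t (e₁ x) = b x := by
  classical
  haveI : Countable (Task L U W) := task_countable hWc
  haveI : Encodable (U ⊕ Task L U W) := Encodable.ofCountable _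
  let D : U ⊕ Task L U W → Order.Cofinal (PartW L U W) := fun j =>
    Sum.rec
      (fun x => ⟨{p | x ∈ p.dom}, fun p => by
        obtain ⟨q, h1, h2⟩ := cof_pt r s ιs hage hhomog hruniv hιs x p
        exact ⟨q, h2, h1⟩⟩)
      (fun τ => ⟨{p | TaskOK τ p}, fun p => by
        obtain ⟨q, h1, h2⟩ := cof_task r s ιs hage hhomog hruniv hrhom hιs τ p
        exact ⟨q, h2, h1⟩⟩) j
  let p₀ : PartW L U W := ⟨⊥, Substructure.fg_bot,
    (s.comp r).comp (Substructure.subtype ⊥).toHom⟩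
  let ch : ℕ → PartW L U W := Order.sequenceOfCofinals p₀ D
  have chmono : Monotone ch := Order.sequenceOfCofinals.monotone p₀ D
  have hNx : ∀ x : U, x ∈ (ch (Encodable.encode (Sum.inl x : U ⊕ Task L U W) + 1)).dom :=
    fun x => Order.sequenceOfCofinals.encode_mem p₀ D (Sum.inl x)
  let Nx : U → ℕ := fun x => Encodable.encode (Sum.inl x : U ⊕ Task L U W) + 1
  let tfun : U → W := fun x => (ch (Nx x)).w ⟨x, hNx x⟩
  have coh : ∀ (n : ℕ) (x : U) (hx : x ∈ (ch n).dom), tfun x = (ch n).w ⟨x, hx⟩ := by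
    intro n x hx
    have h1 := (chmono (le_max_left n (Nx x))).2 x hx
    have h2 := (chmono (le_max_right n (Nx x))).2 x (hNx x)
    exact h2.symm.trans h1
  let t : U →[L] W :=
    { toFun := tfun
      map_fun' := by
        intro n f x
        let m := Finset.univ.sup fun j => Nx (x j)
        have hxall : ∀ j, x j ∈ (ch m).dom :=
          fun j => (chmono (Finset.le_sup (Finset.mem_univ j))).1 (hNx (x j))
        have hf : Structure.funMap f x ∈ (ch m).dom :=
          (ch m).dom.fun_mem f x hxall
        rw [coh m _ hf]
        have heq : (⟨Structure.funMap f x, hf⟩ : (ch m).dom)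
            = Structure.funMap f (fun j => (⟨x j, hxall j⟩ : (ch m).dom)) := rfl
        rw [heq, (ch m).w.map_fun]
        congr 1
        funext j
        exact (coh m (x j) (hxall j)).symm
      map_rel' := by
        intro n R x hR
        let m := Finset.univ.sup fun j => Nx (x j)
        have hxall : ∀ j, x j ∈ (ch m).dom :=
          fun j => (chmono (Finset.le_sup (Finset.mem_univ j))).1 (hNx (x j))
        have hR' : Structure.RelMap R (fun j => (⟨x j, hxall j⟩ : (ch m).dom)) := hR
        have := (ch m).w.map_rel R _ hR'
        convert this using 2
        funext j
        exact coh m (x j) (hxall j) }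
  refine ⟨t, fun A B hA hB e₀ i b hc => ?_⟩
  let τ : Task L U W := ⟨A, hA, B, hB, e₀, i, b⟩
  have hτ : TaskOK τ (ch (Encodable.encode (Sum.inr τ : U ⊕ Task L U W) + 1)) :=
    Order.sequenceOfCofinals.encode_mem p₀ D (Sum.inr τ)
  obtain ⟨h0, himp⟩ := hτ
  have hpre : ∀ a : τ.A,
      (ch (Encodable.encode (Sum.inr τ : U ⊕ Task L U W) + 1)).w ⟨τ.e₀ a, h0 a⟩
        = τ.b (τ.i a) := by
    intro a
    exact (coh _ _ (h0 a)).symm.trans (hc a)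
  obtain ⟨e₁, he₁, hr, hval⟩ := himp hpre
  exact ⟨e₁, he₁, fun x => (coh _ _ (hr x)).trans (hval x)⟩

end Chain


variable {L : FirstOrder.Language.{u, v}}
variable {U V W : Type w} [L.Structure U] [L.Structure V] [L.Structure W]

lemma bot_gen (X : Type w) [L.Structure X] :
    Substructure.closure L (∅ : Set ((⊥ : L.Substructure X) : Type w)) = ⊤ := by
  rw [eq_top_iff]
  rintro ⟨x, hx⟩ -
  have hx' : x ∈ Substructure.closure L (∅ : Set X) := by rwa [Substructure.closure_empty]
  have key : ∃ hy : x ∈ (⊥ : L.Substructure X), (⟨x, hy⟩ : (⊥ : L.Substructure X)) ∈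
      Substructure.closure L (∅ : Set ((⊥ : L.Substructure X) : Type w)) := by
    refine Substructure.closure_induction hx'
      (fun z hz => absurd hz (Set.notMem_empty z)) ?_
    intro n f xs hxs
    have hmem : Structure.funMap f xs ∈ (⊥ : L.Substructure X) :=
      (⊥ : L.Substructure X).fun_mem f xs (fun i => (hxs i).1)
    refine ⟨hmem, ?_⟩
    have heq : (⟨Structure.funMap f xs, hmem⟩ : (⊥ : L.Substructure X)) =
        Structure.funMap f (fun i => (⟨xs i, (hxs i).1⟩ : (⊥ : L.Substructure X))) := rfl
    rw [heq]
    exact (Substructure.closure L (∅ : Set _)).fun_mem f _ (fun i => (hxs i).2)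
  obtain ⟨hy, hmem⟩ := key
  exact hmem

lemma bot_hom_ext {X Y : Type w} [L.Structure X] [L.Structure Y]
    (φ χ : ((⊥ : L.Substructure X) : Type w) →[L] Y) : φ = χ :=
  Hom.eq_of_eqOn_dense (bot_gen X) (fun x hx => absurd hx (Set.notMem_empty x))

lemma pe_agree {A : Type w} [L.Structure A] {f g : A ≃ₚ[L] U} (hfg : f ≤ g)
    (x : A) (hx : x ∈ f.dom) :
    (g.toEquiv ⟨x, PartialEquiv.dom_le_dom hfg hx⟩ : U) = (f.toEquiv ⟨x, hx⟩ : U) := by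
  obtain ⟨hdom, hcod, heq⟩ := PartialEquiv.le_iff.1 hfg
  have h1 := heq ⟨x, hx⟩
  have h2 : (Substructure.inclusion hdom ⟨x, hx⟩ : g.dom) = ⟨x, hdom hx⟩ := rfl
  rw [h2] at h1
  have h3 : (⟨x, PartialEquiv.dom_le_dom hfg hx⟩ : g.dom) = ⟨x, hdom hx⟩ := rfl
  rw [h3, ← h1]
  rfl


section Derive

variable [Countable (Σ l, L.Functions l)] [Countable U]
variable {K : Set (Bundled.{w} L.Structure)}
variable (hage : L.age U = K)

include hage in
lemma univ_of_EP (t : U →[L] W)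
    (hEP : ∀ (A B : L.Substructure U), A.FG → B.FG →
        ∀ (e₀ : A ↪[L] U) (i : A ↪[L] B) (b : B →[L] W),
        (∀ a : A, t (e₀ a) = b (i a)) →
        ∃ e₁ : B ↪[L] U, (∀ a : A, e₁ (i a) = (e₀ a : U)) ∧ ∀ x : B, t (e₁ x) = b x)
    (A : Type w) [L.Structure A] (hAc : Countable A) (hAK : L.age A ⊆ K) (h : A →[L] W) :
    ∃ ι : A ↪[L] U, ∀ a : A, t (ι a) = h a := by
  classical
  -- the extension step
  have step : ∀ pe : A ≃ₚ[L] U, pe.dom.FG →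
      (∀ x : pe.dom, t (pe.toEquiv x : U) = h x) → ∀ a : A,
      ∃ g : A ≃ₚ[L] U, pe ≤ g ∧ a ∈ g.dom ∧ g.dom.FG ∧
        (∀ x : g.dom, t (g.toEquiv x : U) = h x) := by
    intro pe hfg hcompat a
    set A' : L.Substructure A := pe.dom ⊔ Substructure.closure L {a} with hA'def
    have hA'fg : A'.FG := hfg.sup (Substructure.fg_closure_singleton a)
    have hA'fg' : Structure.FG L (↥A') := (Substructure.fg_iff_structure_fg _).1 hA'fg
    have hA'K : (⟨↥A', inferInstance⟩ : Bundled L.Structure) ∈ L.age U := by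
      rw [hage]
      exact hAK ⟨hA'fg', ⟨A'.subtype⟩⟩
    obtain ⟨-, ⟨n⟩⟩ := hA'K
    set B : L.Substructure U := n.toHom.range with hBdef
    have hBfg : B.FG := hA'fg'.range n.toHom
    set ν : (↥A' : Type w) ≃[L] B := n.equivRange with hνdef
    have hdomle : pe.dom ≤ A' := le_sup_left
    have hcodfg : pe.cod.FG := pe.dom_fg_iff_cod_fg.1 hfg
    set i : pe.cod ↪[L] B :=
      ν.toEmbedding.comp ((Substructure.inclusion hdomle).comp pe.toEquiv.symm.toEmbedding)
      with hidef
    set b : (B : Type w) →[L] W := (h.comp A'.subtype.toHom).comp ν.symm.toHom with hbdef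
    have hb : ∀ z : A', b (ν z) = h z := by
      intro z
      show h ((A'.subtype) (ν.symm (ν z)) : A) = h z
      rw [ν.symm_apply_apply]
      rfl
    have hc : ∀ y : pe.cod, t (pe.cod.subtype y) = b (i y) := by
      intro y
      show t (y : U) = b (ν (Substructure.inclusion hdomle (pe.toEquiv.symm y)))
      rw [hb]
      have h4 : ((Substructure.inclusion hdomle (pe.toEquiv.symm y) : A') : A)
          = (pe.toEquiv.symm y : A) := rfl
      rw [h4]
      have h5 := hcompat (pe.toEquiv.symm y)
      rw [pe.toEquiv.apply_symm_apply] at h5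
      exact h5
    obtain ⟨e₁, he₁, hval⟩ := hEP pe.cod B hcodfg hBfg pe.cod.subtype i b hc
    set emb : (A' : Type w) ↪[L] U := e₁.comp ν.toEmbedding with hembdef
    refine ⟨⟨A', emb.toHom.range, emb.equivRange⟩, ?_, ?_, hA'fg, ?_⟩
    · rw [PartialEquiv.le_iff]
      have hcodle : pe.cod ≤ emb.toHom.range := by
        intro y hy
        refine Hom.mem_range.2 ⟨Substructure.inclusion hdomle (pe.toEquiv.symm ⟨y, hy⟩), ?_⟩
        show e₁ (ν (Substructure.inclusion hdomle (pe.toEquiv.symm ⟨y, hy⟩))) = y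
        have : ν (Substructure.inclusion hdomle (pe.toEquiv.symm ⟨y, hy⟩)) = i ⟨y, hy⟩ := rfl
        rw [this, he₁]
        rfl
      refine ⟨hdomle, hcodle, fun x => ?_⟩
      apply Subtype.ext
      show (pe.toEquiv x : U) = (emb.equivRange (Substructure.inclusion hdomle x) : U)
      rw [Embedding.equivRange_apply]
      show (pe.toEquiv x : U) = e₁ (ν (Substructure.inclusion hdomle x))
      have h6 : ν (Substructure.inclusion hdomle x) = i (pe.toEquiv x) := by
        show _ = ν (Substructure.inclusion hdomle (pe.toEquiv.symm (pe.toEquiv x)))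
        rw [pe.toEquiv.symm_apply_apply]
      rw [h6, he₁]
      rfl
    · exact (le_sup_right : Substructure.closure L {a} ≤ A')
        (Substructure.subset_closure (Set.mem_singleton a))
    · intro x
      show t (emb.equivRange x : U) = h x
      rw [Embedding.equivRange_apply]
      show t (e₁ (ν x)) = h x
      rw [hval, hb]
  -- base partial equiv on the bottom substructure of A
  have hbotK : (⟨↥(⊥ : L.Substructure A), inferInstance⟩ : Bundled L.Structure) ∈ L.age U := by
    rw [hage]
    exact hAK ⟨(Substructure.fg_iff_structure_fg _).1 Substructure.fg_bot,
      ⟨(⊥ : L.Substructure A).subtype⟩⟩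
  obtain ⟨-, ⟨j⟩⟩ := hbotK
  have hcompat0 : ∀ x : (⊥ : L.Substructure A), t (j x) = h x := by
    have hhh := bot_hom_ext (L := L) (t.comp j.toHom)
      (h.comp (⊥ : L.Substructure A).subtype.toHom)
    intro x
    exact DFunLike.congr_fun hhh x
  let Q := {f : A ≃ₚ[L] U // f.dom.FG ∧ ∀ x : f.dom, t (f.toEquiv x : U) = h x}
  have hf₀c : ∀ x : (⟨⊥, j.toHom.range, j.equivRange⟩ : A ≃ₚ[L] U).dom,
      t ((⟨⊥, j.toHom.range, j.equivRange⟩ : A ≃ₚ[L] U).toEquiv x : U) = h x := by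
    intro x
    show t (j.equivRange x : U) = h x
    rw [Embedding.equivRange_apply]
    exact hcompat0 x
  let f₀ : Q := ⟨⟨⊥, j.toHom.range, j.equivRange⟩, Substructure.fg_bot, hf₀c⟩
  haveI : Encodable A := Encodable.ofCountable A
  let D : A → Order.Cofinal Q := fun a =>
    ⟨{f | a ∈ f.1.dom}, fun f => by
      obtain ⟨g, h1, h2, h3, h4⟩ := step f.1 f.2.1 f.2.2 a
      exact ⟨⟨g, h3, h4⟩, h2, h1⟩⟩
  let seq := Order.sequenceOfCofinals f₀ D
  have seqmono : Monotone seq := Order.sequenceOfCofinals.monotone f₀ D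
  let S : ℕ →o (A ≃ₚ[L] U) := ⟨fun n => (seq n).1, fun a b hab => seqmono hab⟩
  let F := DirectLimit.partialEquivLimit S
  have hdomtop : F.dom = ⊤ := by
    rw [eq_top_iff]
    intro a _
    have hmem : a ∈ (S (Encodable.encode a + 1)).dom :=
      Order.sequenceOfCofinals.encode_mem f₀ D a
    exact PartialEquiv.dom_le_dom
      (DirectLimit.le_partialEquivLimit S (Encodable.encode a + 1)) hmem
  refine ⟨PartialEquiv.toEmbeddingOfEqTop hdomtop, fun a => ?_⟩
  have hmem : a ∈ (S (Encodable.encode a + 1)).dom :=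
    Order.sequenceOfCofinals.encode_mem f₀ D a
  rw [PartialEquiv.toEmbeddingOfEqTop_apply hdomtop a]
  have h8 := pe_agree (DirectLimit.le_partialEquivLimit S (Encodable.encode a + 1)) a hmem
  have h9 : (F.toEquiv ⟨a, hdomtop.symm ▸ Substructure.mem_top a⟩ : U)
      = (F.toEquiv ⟨a, PartialEquiv.dom_le_dom
          (DirectLimit.le_partialEquivLimit S (Encodable.encode a + 1)) hmem⟩ : U) := rfl
  rw [h9, h8]
  exact (seq (Encodable.encode a + 1)).2.2 ⟨a, hmem⟩


end Derive

section Derive2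

variable [Countable (Σ l, L.Functions l)] [Countable U]

lemma hom_of_EP (t : U →[L] W)
    (hEP : ∀ (A B : L.Substructure U), A.FG → B.FG →
        ∀ (e₀ : A ↪[L] U) (i : A ↪[L] B) (b : B →[L] W),
        (∀ a : A, t (e₀ a) = b (i a)) →
        ∃ e₁ : B ↪[L] U, (∀ a : A, e₁ (i a) = (e₀ a : U)) ∧ ∀ x : B, t (e₁ x) = b x)
    (S₀ : L.Substructure U) (hS₀ : S₀.FG) (ι : S₀ ↪[L] U)
    (hι : ∀ x : S₀, t (ι x) = t x) :
    ∃ α : U ≃[L] U, (∀ x : U, t (α x) = t x) ∧ ∀ x : S₀, α x = ι x := by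
  classical
  have step : ∀ pe : U ≃ₚ[L] U, pe.dom.FG → (∀ x : pe.dom, t (pe.toEquiv x : U) = t x) →
      ∀ m : U, ∃ g : U ≃ₚ[L] U, pe ≤ g ∧ m ∈ g.dom ∧ g.dom.FG ∧
        (∀ x : g.dom, t (g.toEquiv x : U) = t x) := by
    intro pe hfg hcompat m
    set B : L.Substructure U := pe.dom ⊔ Substructure.closure L {m} with hBdef
    have hBfg : B.FG := hfg.sup (Substructure.fg_closure_singleton m)
    have hdomle : pe.dom ≤ B := le_sup_left
    set e₀ : pe.dom ↪[L] U := pe.cod.subtype.comp pe.toEquiv.toEmbedding with he₀def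
    set i : pe.dom ↪[L] B := Substructure.inclusion hdomle with hidef
    set b : (B : Type w) →[L] W := t.comp B.subtype.toHom with hbdef
    have hc : ∀ a : pe.dom, t (e₀ a) = b (i a) := by
      intro a
      show t (pe.toEquiv a : U) = t ((Substructure.inclusion hdomle a : B) : U)
      rw [hcompat a]
      rfl
    obtain ⟨e₁, he₁, hval⟩ := hEP pe.dom B hfg hBfg e₀ i b hc
    refine ⟨⟨B, e₁.toHom.range, e₁.equivRange⟩, ?_, ?_, hBfg, ?_⟩
    · rw [PartialEquiv.le_iff]
      have hcodle : pe.cod ≤ e₁.toHom.range := by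
        intro y hy
        refine Hom.mem_range.2 ⟨i (pe.toEquiv.symm ⟨y, hy⟩), ?_⟩
        show e₁ (i (pe.toEquiv.symm ⟨y, hy⟩)) = y
        rw [he₁]
        show ((pe.toEquiv (pe.toEquiv.symm ⟨y, hy⟩) : pe.cod) : U) = y
        rw [pe.toEquiv.apply_symm_apply]
      refine ⟨hdomle, hcodle, fun x => ?_⟩
      apply Subtype.ext
      show (pe.toEquiv x : U) = (e₁.equivRange (Substructure.inclusion hdomle x) : U)
      rw [Embedding.equivRange_apply]
      show _ = e₁ (i x)
      rw [he₁]
      rfl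
    · exact (le_sup_right : Substructure.closure L {m} ≤ B)
        (Substructure.subset_closure (Set.mem_singleton m))
    · intro x
      show t (e₁.equivRange x : U) = t x
      rw [Embedding.equivRange_apply, hval]
      rfl
  have symm_compat : ∀ pe : U ≃ₚ[L] U, (∀ x : pe.dom, t (pe.toEquiv x : U) = t x) →
      ∀ y : pe.symm.dom, t (pe.symm.toEquiv y : U) = t y := by
    intro pe hc y
    show t (pe.toEquiv.symm y : U) = t (y : U)
    have h1 := hc (pe.toEquiv.symm y)
    erw [pe.toEquiv.apply_symm_apply] at h1
    exact h1.symm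
  let Q := {f : U ≃ₚ[L] U // f.dom.FG ∧ ∀ x : f.dom, t (f.toEquiv x : U) = t x}
  have hg₀c : ∀ x : (⟨S₀, ι.toHom.range, ι.equivRange⟩ : U ≃ₚ[L] U).dom,
      t ((⟨S₀, ι.toHom.range, ι.equivRange⟩ : U ≃ₚ[L] U).toEquiv x : U) = t x := by
    intro x
    show t (ι.equivRange x : U) = t x
    rw [Embedding.equivRange_apply]
    exact hι x
  let g₀ : Q := ⟨⟨S₀, ι.toHom.range, ι.equivRange⟩, hS₀, hg₀c⟩
  haveI : Encodable (U ⊕ U) := Encodable.ofCountable _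
  let D : U ⊕ U → Order.Cofinal Q := fun z =>
    Sum.rec
      (fun m => ⟨{f | m ∈ f.1.dom}, fun f => by
        obtain ⟨g, h1, h2, h3, h4⟩ := step f.1 f.2.1 f.2.2 m
        exact ⟨⟨g, h3, h4⟩, h2, h1⟩⟩)
      (fun m => ⟨{f | m ∈ f.1.cod}, fun f => by
        have hsymfg : f.1.symm.dom.FG := f.1.dom_fg_iff_cod_fg.1 f.2.1
        obtain ⟨g, h1, h2, h3, h4⟩ := step f.1.symm hsymfg (symm_compat f.1 f.2.2) m
        have hsfg : g.symm.dom.FG := g.dom_fg_iff_cod_fg.1 h3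
        refine ⟨⟨g.symm, hsfg, symm_compat g h4⟩, h2, ?_⟩
        exact PartialEquiv.symm_le_iff.1 h1⟩) z
  let seq := Order.sequenceOfCofinals g₀ D
  have seqmono : Monotone seq := Order.sequenceOfCofinals.monotone g₀ D
  let S : ℕ →o (U ≃ₚ[L] U) := ⟨fun n => (seq n).1, fun a b hab => seqmono hab⟩
  let F := DirectLimit.partialEquivLimit S
  have hdomtop : F.dom = ⊤ := by
    rw [eq_top_iff]
    intro x _
    have hmem : x ∈ (S (Encodable.encode (Sum.inl x : U ⊕ U) + 1)).dom :=
      Order.sequenceOfCofinals.encode_mem g₀ D (Sum.inl x)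
    exact PartialEquiv.dom_le_dom
      (DirectLimit.le_partialEquivLimit S (Encodable.encode (Sum.inl x : U ⊕ U) + 1)) hmem
  have hcodtop : F.cod = ⊤ := by
    rw [eq_top_iff]
    intro y _
    have hmem : y ∈ (S (Encodable.encode (Sum.inr y : U ⊕ U) + 1)).cod :=
      Order.sequenceOfCofinals.encode_mem g₀ D (Sum.inr y)
    exact PartialEquiv.cod_le_cod
      (DirectLimit.le_partialEquivLimit S (Encodable.encode (Sum.inr y : U ⊕ U) + 1)) hmem
  have happ : ∀ (x : U) (n : ℕ) (hx : x ∈ (S n).dom),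
      PartialEquiv.toEquivOfEqTop hdomtop hcodtop x = ((S n).toEquiv ⟨x, hx⟩ : U) := by
    intro x n hx
    have h6 : PartialEquiv.toEquivOfEqTop hdomtop hcodtop x
        = (PartialEquiv.toEquivOfEqTop hdomtop hcodtop).toEmbedding x := rfl
    rw [h6, PartialEquiv.toEquivOfEqTop_toEmbedding hdomtop hcodtop,
      PartialEquiv.toEmbeddingOfEqTop_apply hdomtop x]
    have h7 : (F.toEquiv ⟨x, hdomtop.symm ▸ Substructure.mem_top x⟩ : U)
        = (F.toEquiv ⟨x, PartialEquiv.dom_le_dom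
            (DirectLimit.le_partialEquivLimit S n) hx⟩ : U) := rfl
    rw [h7]
    exact pe_agree (DirectLimit.le_partialEquivLimit S n) x hx
  refine ⟨PartialEquiv.toEquivOfEqTop hdomtop hcodtop, fun x => ?_, fun x => ?_⟩
  · have hmem : x ∈ (S (Encodable.encode (Sum.inl x : U ⊕ U) + 1)).dom :=
      Order.sequenceOfCofinals.encode_mem g₀ D (Sum.inl x)
    rw [happ x _ hmem]
    exact (seq (Encodable.encode (Sum.inl x : U ⊕ U) + 1)).2.2 ⟨x, hmem⟩
  · have hmem0 : (x : U) ∈ (S 0).dom := x.2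
    rw [happ (x : U) 0 hmem0]
    show ((ι.equivRange ⟨(x : U), x.2⟩ : ι.toHom.range) : U) = ι x
    rw [Embedding.equivRange_apply]

end Derive2

end S8

open UHomog FirstOrder FirstOrder.Language in
/-- Proposition: if `r : U ↠ V` is a universal homogeneous retraction from the Fraïssé limit `U`
of `K` and `s : V ↠ W` is any retraction, then there is a universal homogeneous retraction
`ŝ : U ↠ W`. -/
theorem statement8
    (L : FirstOrder.Language.{u, v})
    [Countable (Σ l, L.Functions l)] [Countable (Σ l, L.Relations l)]
    (K : Set (Bundled.{w} L.Structure)) (hK : IsFraisse K)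
    (U : Type w) [L.Structure U] [Countable U] (hU : IsFraisseLimit K U)
    (V W : Type w) [L.Structure V] [L.Structure W]
    (hV : InBar L K V) (hW : InBar L K W)
    (r : U →[L] V) (hrret : IsRetraction L r)
    (hruniv : IsUniversalHom L K r) (hrhom : IsHomogeneousHom L r)
    (s : V →[L] W) (hs : IsRetraction L s) :
    ∃ t : U →[L] W, IsRetraction L t ∧ IsUniversalHom L K t ∧ IsHomogeneousHom L t := by
  classical
  obtain ⟨ιs, hιs⟩ := hs
  haveI hWc : Countable W := hW.1
  have hage : L.age U = K := hU.age
  have hhomog := hU.ultrahomogeneous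
  obtain ⟨t, hEP⟩ := S8.exists_EP r s ιs hage hhomog hruniv hrhom hιs hWc
  refine ⟨t, ?_, ?_, ?_⟩
  · obtain ⟨ι, hι⟩ := S8.univ_of_EP hage t hEP W hWc hW.2 (Hom.id L W)
    exact ⟨ι.toHom, fun b => hι b⟩
  · intro A hA h
    obtain ⟨ι, hι⟩ := S8.univ_of_EP hage t hEP A hA.1 hA.2 h
    exact ⟨ι, hι⟩
  · intro S hS ι hι
    exact S8.hom_of_EP t hEP S hS ι hι
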